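/- Let n >= 3 be an integer and let alpha, beta, gamma, gamma_0,...,gamma_{n-1} be real numbers with alpha + n*beta = 1, gamma + sum_{j=0}^{n-1} gamma_j = 1 and gamma + n*beta != 0, and set tau = beta/(gamma + n*beta). Let v and e_0,...,e_{n-1} be real numbers (indices modulo n), and define one step of modified Loop subdivision on the 1-ring by v' = alpha*v + beta*sum_{j=0}^{n-1} e_j and e'_k = gamma*v + sum_{j=0}^{n-1} gamma_j * e_{j+k} for k = 0,...,n-1. Then (1 - n*tau)*v' + tau*sum_{k=0}^{n-1} e'_k = (1 - n*tau)*v + tau*sum_{j=0}^{n-1} e_j. -/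

import Mathlib

/-- The modified Loop subdivision limit-position mask `(1 - n τ, τ, …, τ)` with
`τ = β / (γ + n β)` is invariant under one step of modified Loop subdivision
on the 1-ring of a vertex of valence `n`. -/
theorem modified_loop_limit_mask_invariant
    (n : ℕ) [NeZero n] (hn : 3 ≤ n) (α β γ : ℝ) (γs : ZMod n → ℝ)
    (hαβ : α + n * β = 1) (hγ : γ + ∑ j, γs j = 1)
    (hden : γ + n * β ≠ 0)
    (τ : ℝ) (hτ : τ = β / (γ + n * β))
    (v : ℝ) (e : ZMod n → ℝ)
    (v' : ℝ) (hv' : v' = α * v + β * ∑ j, e j)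
    (e' : ZMod n → ℝ)
    (he' : ∀ k, e' k = γ * v + ∑ j, γs j * e (j + k)) :
    (1 - n * τ) * v' + τ * ∑ k, e' k = (1 - n * τ) * v + τ * ∑ j, e j := by
  have hτd : τ * (γ + n * β) = β := by
    rw [hτ]; exact div_mul_cancel₀ β hden
  have hsum : ∑ k, e' k = (n : ℝ) * (γ * v) + (∑ j, γs j) * (∑ j, e j) := by
    simp only [he']
    rw [Finset.sum_add_distrib, Finset.sum_const, Finset.card_univ, ZMod.card,
      nsmul_eq_mul, Finset.sum_mul]
    congr 1
    rw [Finset.sum_comm]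
    refine Finset.sum_congr rfl fun j _ => ?_
    rw [← Finset.mul_sum]
    congr 1
    exact (Fintype.sum_equiv (Equiv.addLeft j) (fun k => e (j + k)) e (fun k => rfl))
  rw [hv', hsum]
  have h1 : ∑ j, γs j = 1 - γ := by linarith
  have h2 : α = 1 - n * β := by linarith
  rw [h1, h2]
  linear_combination (↑n * v - ∑ j, e j) * hτd
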